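/- arXiv:2204.06083 — 3 statements merged into one kernel-verified Lean document; each statement's English description precedes it below -/
import Mathlib

section
/- Let n ≥ 3 be an integer and let a, b be real numbers satisfying a > (n−2)/(n−1), b > (n−2)/(n−1), and a > ((n−2)b − (n−3)) / ((n−1)b − (n−2)). Then the n×n matrix D^(n)(a,b) is symmetric positive definite. -/
/-- The `n × n` tridiagonal matrix with diagonal `(a, 2, 2, …, 2, b)`
(first diagonal entry `a`, last diagonal entry `b`, all other diagonal entries `2`),
sub- and super-diagonal entries `-1`, and all remaining entries `0`. -/
def Dmat (n : ℕ) (a b : ℝ) : Matrix (Fin n) (Fin n) ℝ :=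
  Matrix.of fun i j =>
    if i = j then (if i.val = 0 then a else if i.val = n - 1 then b else 2)
    else if i.val + 1 = j.val ∨ j.val + 1 = i.val then -1 else 0

open Matrix

/-- Pivots of the LDLᵀ decomposition of `Dmat`. -/
noncomputable def qf (n : ℕ) (a b : ℝ) (k : ℕ) : ℝ :=
  if k = n - 1 then b - (((n:ℝ)-2)*a - ((n:ℝ)-3))/(((n:ℝ)-1)*a - ((n:ℝ)-2))
  else (((k:ℝ)+1)*a - (k:ℝ)) / ((k:ℝ)*a - ((k:ℝ)-1))

/-- Unit lower bidiagonal matrix of the LDLᵀ decomposition. -/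
noncomputable def Lm (n : ℕ) (a b : ℝ) : Matrix (Fin n) (Fin n) ℝ :=
  Matrix.of fun i j => if i = j then 1 else if (j:ℕ) + 1 = (i:ℕ) then -(1 / qf n a b j) else 0

lemma pos_lin (n : ℕ) (a : ℝ) (hn : 3 ≤ n) (ha : a > ((n:ℝ)-2)/((n:ℝ)-1))
    {k : ℕ} (hk : k ≤ n - 1) : 0 < (k:ℝ)*a - ((k:ℝ)-1) := by
  have hn3 : (3:ℝ) ≤ (n:ℝ) := by exact_mod_cast hn
  have hn1 : (0:ℝ) < (n:ℝ) - 1 := by linarith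
  have ha' : (n:ℝ) - 2 < ((n:ℝ)-1) * a := by
    have := (div_lt_iff₀ hn1).mp ha
    linarith [this]
  have hk' : (k:ℝ) ≤ (n:ℝ) - 1 := by
    have h1 : (k:ℝ) ≤ ((n-1 : ℕ) : ℝ) := by exact_mod_cast hk
    have h2 : ((n-1 : ℕ) : ℝ) = (n:ℝ) - 1 := by
      have : 1 ≤ n := by omega
      push_cast [Nat.cast_sub this]
      ring
    linarith [h1, h2.le, h2.ge]
  have hk0 : (0:ℝ) ≤ (k:ℝ) := Nat.cast_nonneg k
  rcases le_or_gt 1 a with h | h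
  · nlinarith
  · nlinarith [mul_le_mul_of_nonneg_right hk' (by linarith : (0:ℝ) ≤ 1 - a)]

lemma qf_pos (n : ℕ) (a b : ℝ) (hn : 3 ≤ n)
    (ha : a > ((n:ℝ)-2)/((n:ℝ)-1)) (hb : b > ((n:ℝ)-2)/((n:ℝ)-1))
    (hab : a > (((n:ℝ)-2)*b - ((n:ℝ)-3)) / (((n:ℝ)-1)*b - ((n:ℝ)-2)))
    {k : ℕ} (hk : k ≤ n - 1) : 0 < qf n a b k := by
  have hn3 : (3:ℝ) ≤ (n:ℝ) := by exact_mod_cast hn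
  by_cases hlast : k = n - 1
  · subst hlast
    rw [qf, if_pos rfl]
    -- need b - N/D > 0 with D = (n-1)a-(n-2) > 0
    have hD : 0 < ((n:ℝ)-1)*a - ((n:ℝ)-2) := by
      have := pos_lin n a hn ha (k := n-1) le_rfl
      have hcast : ((n-1 : ℕ) : ℝ) = (n:ℝ) - 1 := by
        have : 1 ≤ n := by omega
        push_cast [Nat.cast_sub this]; ring
      rw [hcast] at this
      linarith
    have hDb : 0 < ((n:ℝ)-1)*b - ((n:ℝ)-2) := by
      have := pos_lin n b hn hb (k := n-1) le_rfl
      have hcast : ((n-1 : ℕ) : ℝ) = (n:ℝ) - 1 := by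
        have : 1 ≤ n := by omega
        push_cast [Nat.cast_sub this]; ring
      rw [hcast] at this
      linarith
    have hab' : (((n:ℝ)-2)*b - ((n:ℝ)-3)) < a * (((n:ℝ)-1)*b - ((n:ℝ)-2)) := by
      have := (div_lt_iff₀ hDb).mp hab
      linarith
    rw [sub_pos, div_lt_iff₀ hD]
    nlinarith
  · rw [qf, if_neg hlast]
    have hk1 : k + 1 ≤ n - 1 := by omega
    have h1 : 0 < ((k:ℝ)+1)*a - (k:ℝ) := by
      have := pos_lin n a hn ha hk1
      push_cast at this
      linarith
    have h2 : 0 < (k:ℝ)*a - ((k:ℝ)-1) := pos_lin n a hn ha (by omega)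
    exact div_pos h1 h2

lemma sum_pred {n : ℕ} (h : Fin n → ℝ) (i : Fin n) {s : ℕ} (hs : (i:ℕ) = s + 1) :
    (∑ k : Fin n, if (k:ℕ) + 1 = (i:ℕ) then h k else 0) = h ⟨s, by omega⟩ := by
  rw [Finset.sum_eq_single_of_mem (⟨s, by omega⟩ : Fin n) (Finset.mem_univ _)]
  · rw [if_pos (by simp only [Fin.val_mk]; omega)]
  · intro k _ hne
    rw [if_neg]
    intro hc
    exact hne (Fin.ext (by simp only [Fin.val_mk]; omega))

lemma sum_pred0 {n : ℕ} (h : Fin n → ℝ) (i : Fin n) (hi : (i:ℕ) = 0) :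
    (∑ k : Fin n, if (k:ℕ) + 1 = (i:ℕ) then h k else 0) = 0 := by
  apply Finset.sum_eq_zero
  intro k _
  rw [if_neg (by omega)]

lemma factor (n : ℕ) (a b : ℝ) (hn : 3 ≤ n)
    (ha : a > ((n:ℝ)-2)/((n:ℝ)-1)) (hb : b > ((n:ℝ)-2)/((n:ℝ)-1))
    (hab : a > (((n:ℝ)-2)*b - ((n:ℝ)-3)) / (((n:ℝ)-1)*b - ((n:ℝ)-2))) :
    Lm n a b * Matrix.diagonal (fun i : Fin n => qf n a b i.val) * (Lm n a b)ᵀ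
      = Dmat n a b := by
  have hn3 : (3:ℝ) ≤ (n:ℝ) := by exact_mod_cast hn
  have hqpos : ∀ k : ℕ, k ≤ n - 1 → 0 < qf n a b k := fun k hk => qf_pos n a b hn ha hb hab hk
  have hqne : ∀ k : ℕ, k ≤ n - 1 → qf n a b k ≠ 0 := fun k hk => (hqpos k hk).ne'
  have hden : ∀ k : ℕ, k ≤ n - 1 → (k:ℝ)*a - ((k:ℝ)-1) ≠ 0 :=
    fun k hk => (pos_lin n a hn ha hk).ne'
  ext i j
  rw [Matrix.mul_apply]
  simp only [Matrix.mul_diagonal, Matrix.transpose_apply]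
  have hsplit : ∀ k : Fin n,
      Lm n a b i k * qf n a b k.val * Lm n a b j k =
        (if i = k then qf n a b i.val * Lm n a b j i else 0) +
        (if (k:ℕ) + 1 = (i:ℕ) then -(Lm n a b j k) else 0) := by
    intro k
    by_cases h1 : i = k
    · subst h1
      rw [if_pos rfl, if_neg (by omega)]
      simp only [Lm, Matrix.of_apply, if_pos rfl, if_true]
      ring
    · rw [if_neg h1]
      by_cases h2 : (k:ℕ) + 1 = (i:ℕ)
      · rw [if_pos h2]
        simp only [Lm, Matrix.of_apply, if_neg h1, if_pos h2]
        have : qf n a b k.val ≠ 0 := hqne k.val (by omega)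
        split_ifs <;> field_simp <;> ring
      · rw [if_neg h2]
        simp only [Lm, Matrix.of_apply, if_neg h1, if_neg h2]
        ring
  rw [Finset.sum_congr rfl (fun k _ => hsplit k), Finset.sum_add_distrib,
    Finset.sum_ite_eq Finset.univ i (fun _ => qf n a b i.val * Lm n a b j i),
    if_pos (Finset.mem_univ i)]
  -- now case on i.val
  rcases Nat.eq_zero_or_pos i.val with hi0 | hipos
  · rw [sum_pred0 _ i hi0, add_zero]
    -- i is the first row
    by_cases hij : i = j
    · subst hij
      simp only [Lm, Matrix.of_apply, if_pos rfl, mul_one]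
      rw [Dmat, Matrix.of_apply, if_pos rfl, if_pos hi0, qf, if_neg (by omega), hi0]
      norm_num
    · -- off-diagonal, first row: entry (i,j), i.val = 0
      simp only [Lm, Matrix.of_apply, if_neg (fun hc => hij hc.symm : ¬ j = i)]
      by_cases h2 : (i:ℕ) + 1 = (j:ℕ)
      · rw [if_pos h2]
        rw [Dmat, Matrix.of_apply, if_neg hij, if_pos (Or.inl h2)]
        have : qf n a b i.val ≠ 0 := hqne i.val (by omega)
        field_simp
      · rw [if_neg h2]
        rw [Dmat, Matrix.of_apply, if_neg hij, if_neg (by omega)]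
        ring
  · obtain ⟨s, hs⟩ : ∃ s, (i:ℕ) = s + 1 := ⟨i.val - 1, by omega⟩
    rw [sum_pred _ i hs]
    set i' : Fin n := ⟨s, by omega⟩ with hi'
    have hi'v : (i':ℕ) = s := rfl
    by_cases hij : i = j
    · subst hij
      -- diagonal entry, i.val = s+1 > 0
      have hii' : ¬ (i = i') := by
        intro hc; rw [hc] at hs; simp only [hi'v] at hs; omega
      have hLii : Lm n a b i i = 1 := by
        simp [Lm]
      have hLii' : Lm n a b i i' = -(1 / qf n a b i'.val) := by
        simp only [Lm, Matrix.of_apply]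
        rw [if_neg hii', if_pos (show (i':ℕ) + 1 = (i:ℕ) by rw [hi'v]; omega)]
      rw [hLii, hLii', mul_one]
      by_cases hlast : (i:ℕ) = n - 1
      · have hD : Dmat n a b i i = b := by
          simp only [Dmat, Matrix.of_apply, eq_self_iff_true, if_true]
          rw [if_neg (by omega : ¬ (i:ℕ) = 0), if_pos hlast]
        rw [hD]
        have hsval : s = n - 2 := by omega
        have hcast : ((s:ℕ):ℝ) = (n:ℝ) - 2 := by
          rw [hsval]
          have : 2 ≤ n := by omega
          push_cast [Nat.cast_sub this]; ring
        have hq' : qf n a b i'.val = (((s:ℝ)+1)*a - (s:ℝ)) / ((s:ℝ)*a - ((s:ℝ)-1)) := by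
          rw [hi'v, qf, if_neg (by omega)]
        have hd1 : ((s:ℝ)+1)*a - (s:ℝ) ≠ 0 := by
          have := hden (s+1) (by omega)
          push_cast at this
          convert this using 2; ring
        have hd2 : (s:ℝ)*a - ((s:ℝ)-1) ≠ 0 := hden s (by omega)
        have hq : qf n a b i.val = b - (((n:ℝ)-2)*a - ((n:ℝ)-3))/(((n:ℝ)-1)*a - ((n:ℝ)-2)) := by
          rw [qf, if_pos hlast]
        rw [hq, hq']
        have he1 : ((s:ℝ)+1)*a - (s:ℝ) = ((n:ℝ)-1)*a - ((n:ℝ)-2) := by rw [hcast]; ring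
        have he2 : (s:ℝ)*a - ((s:ℝ)-1) = ((n:ℝ)-2)*a - ((n:ℝ)-3) := by rw [hcast]; ring
        rw [he1, he2]
        rw [he1] at hd1; rw [he2] at hd2
        field_simp
        ring
      · have hD : Dmat n a b i i = 2 := by
          simp only [Dmat, Matrix.of_apply, eq_self_iff_true, if_true]
          rw [if_neg (by omega : ¬ (i:ℕ) = 0), if_neg hlast]
        rw [hD]
        have hcast : ((i.val:ℕ):ℝ) = (s:ℝ) + 1 := by rw [hs]; push_cast; ring
        have hq1 : qf n a b i.val = (((s:ℝ)+1+1)*a - ((s:ℝ)+1)) / (((s:ℝ)+1)*a - ((s:ℝ)+1-1)) := by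
          rw [qf, if_neg hlast, hcast]
        have hq2 : qf n a b i'.val = (((s:ℝ)+1)*a - (s:ℝ)) / ((s:ℝ)*a - ((s:ℝ)-1)) := by
          rw [hi'v, qf, if_neg (by omega)]
        have hd1 : ((s:ℝ)+1)*a - (s:ℝ) ≠ 0 := by
          have := hden (s+1) (by omega)
          push_cast at this
          convert this using 2; ring
        have hd2 : (s:ℝ)*a - ((s:ℝ)-1) ≠ 0 := hden s (by omega)
        have hd3 : ((s:ℝ)+2)*a - ((s:ℝ)+1) ≠ 0 := by
          have := hden (s+2) (by omega)
          push_cast at this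
          convert this using 2; ring
        rw [hq1, hq2]
        have he0 : ((s:ℝ)+1+1)*a - ((s:ℝ)+1) = ((s:ℝ)+2)*a - ((s:ℝ)+1) := by ring
        have he1 : ((s:ℝ)+1)*a - ((s:ℝ)+1-1) = ((s:ℝ)+1)*a - (s:ℝ) := by ring
        rw [he0, he1]
        field_simp
        rw [div_eq_iff (by convert hd1 using 1; ring)]
        ring
    · -- off-diagonal entry, i.val = s+1
      simp only [Lm, Matrix.of_apply, if_neg (fun hc => hij hc.symm : ¬ j = i)]
      have hji' : (j = i') ↔ ((j:ℕ) = s) := by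
        constructor
        · intro hc; rw [hc]
        · intro hc; exact Fin.ext (by omega)
      by_cases h2 : (i:ℕ) + 1 = (j:ℕ)
      · -- superdiagonal: j = i+1
        rw [if_pos h2, if_neg (by rw [hji']; omega), if_neg (by omega)]
        rw [Dmat, Matrix.of_apply, if_neg hij, if_pos (Or.inl h2)]
        have : qf n a b i.val ≠ 0 := hqne i.val (by omega)
        field_simp
        ring
      · by_cases h3 : (j:ℕ) + 1 = (i:ℕ)
        · -- subdiagonal: j = i-1 = i'
          rw [if_neg (by omega), if_pos (by rw [hji']; omega)]
          rw [Dmat, Matrix.of_apply, if_neg hij, if_pos (Or.inr h3)]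
          ring
        · rw [if_neg (by omega), if_neg (by rw [hji']; omega), if_neg (by omega)]
          rw [Dmat, Matrix.of_apply, if_neg hij, if_neg (by omega)]
          ring

theorem stmt2 (n : ℕ) (hn : 3 ≤ n) (a b : ℝ)
    (ha : a > ((n : ℝ) - 2) / ((n : ℝ) - 1))
    (hb : b > ((n : ℝ) - 2) / ((n : ℝ) - 1))
    (hab : a > (((n : ℝ) - 2) * b - ((n : ℝ) - 3)) / (((n : ℝ) - 1) * b - ((n : ℝ) - 2))) :
    (Dmat n a b).PosDef := by
  have hd : ∀ i : Fin n, 0 < qf n a b i.val := fun i =>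
    qf_pos n a b hn ha hb hab (by omega)
  have hfac := factor n a b hn ha hb hab
  refine Matrix.PosDef.of_dotProduct_mulVec_pos ?_ ?_
  · -- symmetry
    ext i j
    simp only [Matrix.conjTranspose_apply, Dmat, Matrix.of_apply, star_trivial]
    by_cases hij : i = j
    · subst hij; simp
    · rw [if_neg (fun hc => hij hc.symm), if_neg hij]
      simp [or_comm]
  · intro x hx
    rw [← hfac]
    set L := Lm n a b with hL
    have hLdet : L.det = 1 := by
      have hbt : L.BlockTriangular OrderDual.toDual := by
        intro i j hij
        have : (i:ℕ) < (j:ℕ) := hij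
        simp only [hL, Lm, Matrix.of_apply]
        rw [if_neg (fun hc => by omega), if_neg (by omega)]
      rw [Matrix.det_of_lowerTriangular L hbt]
      simp [hL, Lm]
    have hyne : Lᵀ *ᵥ x ≠ 0 := by
      intro h0
      have hinj : Function.Injective (Lᵀ).mulVec :=
        Matrix.mulVec_injective_iff_isUnit.mpr (by
          rw [Matrix.isUnit_iff_isUnit_det, Matrix.det_transpose, hLdet]
          exact isUnit_one)
      exact hx (hinj (by rw [h0, Matrix.mulVec_zero]))
    have hD : (Matrix.diagonal (fun i : Fin n => qf n a b i.val)).PosDef :=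
      Matrix.PosDef.diagonal hd
    have hpos := hD.dotProduct_mulVec_pos hyne
    simp only [star_trivial] at hpos ⊢
    calc x ⬝ᵥ (L * Matrix.diagonal (fun i : Fin n => qf n a b i.val) * Lᵀ) *ᵥ x
        = (Lᵀ *ᵥ x) ⬝ᵥ (Matrix.diagonal (fun i : Fin n => qf n a b i.val)) *ᵥ (Lᵀ *ᵥ x) := by
          rw [← Matrix.mulVec_mulVec, ← Matrix.mulVec_mulVec,
            Matrix.dotProduct_mulVec x L, ← Matrix.mulVec_transpose]
      _ > 0 := hpos
end

section
/- Let n ≥ 1 be an integer and let a, b be real numbers with a > 1 and b > 1. Then the n×n matrix D^(n)(a,b) is symmetric positive definite. -/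
open Matrix

lemma Dmat_herm (n : ℕ) (a b : ℝ) : (Dmat n a b).IsHermitian := by
  ext i j
  simp only [Matrix.conjTranspose_apply, Matrix.of_apply, star_trivial, Dmat]
  rcases eq_or_ne i j with h | h
  · subst h; rfl
  · rw [if_neg h, if_neg (Ne.symm h)]
    split_ifs <;> tauto

lemma sum_ite_val (n : ℕ) (x : Fin n → ℝ) (c : ℕ) :
    (∑ j : Fin n, if (j : ℕ) = c then x j else 0)
      = if h : c < n then x ⟨c, h⟩ else 0 := by
  split_ifs with h
  · rw [Finset.sum_eq_single ⟨c, h⟩]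
    · rw [if_pos rfl]
    · intro j _ hj
      rw [if_neg (fun hv => hj (Fin.ext hv))]
    · simp
  · apply Finset.sum_eq_zero
    intro j _
    rw [if_neg (by omega)]

lemma Dmat_mulVec (m : ℕ) (a b : ℝ) (x : Fin (m+2) → ℝ) (i : Fin (m+2)) :
    ((Dmat (m+2) a b) *ᵥ x) i
      = (if (i : ℕ) = 0 then a else if (i : ℕ) = m+1 then b else 2) * x i
        - (if h : (i : ℕ)+1 < m+2 then x ⟨(i : ℕ)+1, h⟩ else 0)
        - (if h : 0 < (i : ℕ) then x ⟨(i : ℕ)-1, by omega⟩ else 0) := by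
  have key : ∀ j : Fin (m+2), Dmat (m+2) a b i j * x j
      = (if j = i then (if (i : ℕ) = 0 then a else if (i : ℕ) = m+1 then b else 2) * x i else 0)
        - (if (j : ℕ) = (i : ℕ)+1 then x j else 0)
        - (if (j : ℕ) = (i : ℕ)-1 ∧ 0 < (i : ℕ) then x j else 0) := by
    intro j
    simp only [Dmat, Matrix.of_apply]
    rcases eq_or_ne i j with rfl | h
    · split_ifs <;> first | ring1 | omega | simp_all
    · rw [if_neg h, if_neg (fun hj : j = i => h hj.symm)]
      split_ifs <;> first | ring1 | omega | simp_all
  show (∑ j, Dmat (m+2) a b i j * x j) = _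
  rw [Finset.sum_congr rfl (fun j _ => key j), Finset.sum_sub_distrib,
    Finset.sum_sub_distrib]
  congr 1
  · congr 1
    · rw [Finset.sum_ite_eq' Finset.univ i, if_pos (Finset.mem_univ i)]
    · rw [sum_ite_val]
  · rcases Nat.eq_zero_or_pos (i : ℕ) with h0 | h0
    · rw [dif_neg (by omega)]
      apply Finset.sum_eq_zero
      intro j _
      rw [if_neg (by omega)]
    · have hcond : ∀ j : Fin (m+2),
          (if (j : ℕ) = (i : ℕ)-1 ∧ 0 < (i : ℕ) then x j else 0)
            = (if (j : ℕ) = (i : ℕ)-1 then x j else 0) := by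
        intro j
        split_ifs <;> first | rfl | tauto
      rw [Finset.sum_congr rfl (fun j _ => hcond j), sum_ite_val,
        dif_pos (show (i : ℕ)-1 < m+2 by omega), dif_pos h0]

lemma Dmat_quad (m : ℕ) (a b : ℝ) (x : Fin (m+2) → ℝ) :
    x ⬝ᵥ ((Dmat (m+2) a b) *ᵥ x)
      = (a-1) * x 0 ^ 2 + (b-1) * x (Fin.last (m+1)) ^ 2
        + ∑ i : Fin (m+1), (x i.castSucc - x i.succ) ^ 2 := by
  have hrow : ∀ i : Fin (m+2), x i * ((Dmat (m+2) a b) *ᵥ x) i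
      = (((if (i:ℕ) = 0 then a else if (i:ℕ) = m+1 then b else 2) - 2) * x i ^ 2
          + 2 * x i ^ 2)
        - x i * (if h : (i:ℕ)+1 < m+2 then x ⟨(i:ℕ)+1, h⟩ else 0)
        - x i * (if h : 0 < (i:ℕ) then x ⟨(i:ℕ)-1, by omega⟩ else 0) := by
    intro i
    rw [Dmat_mulVec]
    ring
  have hD : (∑ i : Fin (m+2),
        ((if (i:ℕ) = 0 then a else if (i:ℕ) = m+1 then b else 2) - 2) * x i ^ 2)
      = (a-2) * x 0 ^ 2 + (b-2) * x (Fin.last (m+1)) ^ 2 := by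
    rw [Fin.sum_univ_succ, Fin.sum_univ_castSucc]
    simp only [Fin.val_succ, Fin.coe_castSucc, Fin.val_last, Fin.val_zero, Fin.succ_last]
    rw [if_pos trivial, if_neg (by omega), if_pos trivial]
    have hmid : ∀ i : Fin m,
        ((if (i:ℕ)+1 = 0 then a else if (i:ℕ)+1 = m+1 then b else 2) - 2)
          * x (i.castSucc.succ) ^ 2 = 0 := by
      intro i
      rw [if_neg (by omega), if_neg (by omega)]
      ring
    rw [Finset.sum_congr rfl fun i _ => hmid i, Finset.sum_const_zero]
    ring
  have hA : (∑ i : Fin (m+2),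
        x i * (if h : (i:ℕ)+1 < m+2 then x ⟨(i:ℕ)+1, h⟩ else 0))
      = ∑ i : Fin (m+1), x i.castSucc * x i.succ := by
    rw [Fin.sum_univ_castSucc, dif_neg (by simp), mul_zero, add_zero]
    refine Finset.sum_congr rfl fun i _ => ?_
    rw [dif_pos (by simp; omega)]
    congr 1
  have hC : (∑ i : Fin (m+2),
        x i * (if h : 0 < (i:ℕ) then x ⟨(i:ℕ)-1, by omega⟩ else 0))
      = ∑ i : Fin (m+1), x i.castSucc * x i.succ := by
    rw [Fin.sum_univ_succ, dif_neg (by simp), mul_zero, zero_add]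
    refine Finset.sum_congr rfl fun i _ => ?_
    rw [dif_pos (by simp)]
    rw [show (⟨((i.succ : ℕ))-1, by omega⟩ : Fin (m+2)) = i.castSucc from by
      apply Fin.ext; simp]
    ring
  have hsq : (∑ i : Fin (m+1), (x i.castSucc - x i.succ) ^ 2)
      = ((∑ i : Fin (m+1), x i.castSucc ^ 2) + (∑ i : Fin (m+1), x i.succ ^ 2))
        - 2 * ∑ i : Fin (m+1), x i.castSucc * x i.succ := by
    rw [Finset.mul_sum, ← Finset.sum_add_distrib, ← Finset.sum_sub_distrib]
    exact Finset.sum_congr rfl fun i _ => by ring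
  have hS1 : (∑ i : Fin (m+1), x i.castSucc ^ 2)
      = (∑ i : Fin (m+2), x i ^ 2) - x (Fin.last (m+1)) ^ 2 := by
    rw [Fin.sum_univ_castSucc (f := fun i => x i ^ 2)]
    ring
  have hS2 : (∑ i : Fin (m+1), x i.succ ^ 2)
      = (∑ i : Fin (m+2), x i ^ 2) - x 0 ^ 2 := by
    rw [Fin.sum_univ_succ (f := fun i => x i ^ 2)]
    ring
  show (∑ i, x i * ((Dmat (m+2) a b) *ᵥ x) i) = _
  rw [Finset.sum_congr rfl fun i _ => hrow i, Finset.sum_sub_distrib,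
    Finset.sum_sub_distrib, Finset.sum_add_distrib, hD, hA, hC,
    ← Finset.mul_sum, hsq, hS1, hS2]
  ring

theorem stmt3 (n : ℕ) (hn : 1 ≤ n) (a b : ℝ) (ha : 1 < a) (hb : 1 < b) :
    (Dmat n a b).PosDef := by
  refine Matrix.PosDef.of_dotProduct_mulVec_pos (Dmat_herm n a b) fun x hx => ?_
  have hst : star x = x := by
    funext i
    exact star_trivial _
  rw [hst]
  match n, hn, x, hx with
  | 1, _, x, hx =>
    have hx0 : x 0 ≠ 0 := fun h => hx (funext fun i => by fin_cases i; exact h)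
    have h1 : 0 < x 0 * x 0 := mul_self_pos.mpr hx0
    simp only [Matrix.mulVec, dotProduct, Dmat, Fin.sum_univ_one, Matrix.of_apply]
    norm_num
    nlinarith
  | (m+2), _, x, hx =>
    rw [Dmat_quad]
    have h3 : 0 ≤ (a-1) * x 0 ^ 2 := mul_nonneg (by linarith) (sq_nonneg _)
    have h4 : 0 ≤ (b-1) * x (Fin.last (m+1)) ^ 2 := mul_nonneg (by linarith) (sq_nonneg _)
    have h5 : 0 ≤ ∑ i : Fin (m+1), (x i.castSucc - x i.succ) ^ 2 :=
      Finset.sum_nonneg fun i _ => sq_nonneg _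
    by_cases hx0 : x 0 = 0
    · have hne : ¬ ∀ i : Fin (m+1), x i.castSucc = x i.succ := by
        intro hall
        apply hx
        funext j
        exact Fin.induction hx0 (fun i ih => by rw [← hall i]; exact ih) j
      push_neg at hne
      obtain ⟨i₀, hi₀⟩ := hne
      have h1 : 0 < (x i₀.castSucc - x i₀.succ) ^ 2 :=
        lt_of_le_of_ne (sq_nonneg _) (Ne.symm (pow_ne_zero 2 (sub_ne_zero.mpr hi₀)))
      have h2 : (x i₀.castSucc - x i₀.succ) ^ 2
          ≤ ∑ i : Fin (m+1), (x i.castSucc - x i.succ) ^ 2 :=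
        Finset.single_le_sum (f := fun i : Fin (m+1) => (x i.castSucc - x i.succ) ^ 2) (fun i _ => sq_nonneg _) (Finset.mem_univ i₀)
      linarith
    · have h1 : 0 < (a-1) * x 0 ^ 2 :=
        mul_pos (by linarith) (lt_of_le_of_ne (sq_nonneg _) (Ne.symm (pow_ne_zero 2 hx0)))
      linarith
end

section
/- Let n ≥ 4 be an integer and let a, b be real numbers with b > (n−2)/(n−1) and a > ((n−2)b − (n−3)) / ((n−1)b − (n−2)). Then a > 0, 0 < 1/a < ((n−1)b − (n−2)) / ((n−2)b − (n−3)), and 2 − 1/a > ((n−3)b − (n−4)) / ((n−2)b − (n−3)). -/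
theorem stmt11 (n : ℕ) (hn : 4 ≤ n) (a b : ℝ)
    (hb : b > ((n : ℝ) - 2) / ((n : ℝ) - 1))
    (ha : a > (((n : ℝ) - 2) * b - ((n : ℝ) - 3)) / (((n : ℝ) - 1) * b - ((n : ℝ) - 2))) :
    a > 0 ∧
    (0 < 1 / a ∧ 1 / a < (((n : ℝ) - 1) * b - ((n : ℝ) - 2)) / (((n : ℝ) - 2) * b - ((n : ℝ) - 3))) ∧
    2 - 1 / a > (((n : ℝ) - 3) * b - ((n : ℝ) - 4)) / (((n : ℝ) - 2) * b - ((n : ℝ) - 3)) := by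
  have hN : (4 : ℝ) ≤ (n : ℝ) := by exact_mod_cast hn
  have hN1 : (0 : ℝ) < (n : ℝ) - 1 := by linarith
  have hb' : (n - 2 : ℝ) < ((n : ℝ) - 1) * b := by
    rw [gt_iff_lt, div_lt_iff₀ hN1] at hb; linarith [hb]
  have h1 : (0 : ℝ) < ((n : ℝ) - 1) * b - ((n : ℝ) - 2) := by linarith
  have h2 : (0 : ℝ) < ((n : ℝ) - 2) * b - ((n : ℝ) - 3) := by nlinarith
  have hXpos : (0 : ℝ) < (((n : ℝ) - 2) * b - ((n : ℝ) - 3)) / (((n : ℝ) - 1) * b - ((n : ℝ) - 2)) :=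
    div_pos h2 h1
  have ha0 : a > 0 := lt_trans hXpos ha
  have hinv : 1 / a < (((n : ℝ) - 1) * b - ((n : ℝ) - 2)) / (((n : ℝ) - 2) * b - ((n : ℝ) - 3)) := by
    rw [div_lt_div_iff₀ ha0 h2]
    rw [gt_iff_lt, div_lt_iff₀ h1] at ha
    nlinarith
  refine ⟨ha0, ⟨by positivity, hinv⟩, ?_⟩
  have key : (((n : ℝ) - 3) * b - ((n : ℝ) - 4)) / (((n : ℝ) - 2) * b - ((n : ℝ) - 3))
      = 2 - (((n : ℝ) - 1) * b - ((n : ℝ) - 2)) / (((n : ℝ) - 2) * b - ((n : ℝ) - 3)) := by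
    rw [eq_sub_iff_add_eq, ← add_div, div_eq_iff h2.ne']
    ring
  rw [key]
  linarith
end
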